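/- Let U_t(z) be a real-valued function on an open set D ⊆ ℂ × (ℂ\{0}) (in variables (z,t)) of the form U_t(z) = Re g(z, u*(z,t)) where g(z,u) = (1/α)Σ_j α_j Log(u−λ_j) + (z−u)²/(2t) (some holomorphic branch) and u*(z,t) is a holomorphic-in-(z,t) solution of ∂_u g(z,u) = 0. Then U satisfies the Hamilton–Jacobi equation ∂_t U_t(z) = −(∂_z U_t(z))², where ∂_z, ∂_t denote Wirtinger derivatives. -/

import Mathlib

/-- The Wirtinger derivative `∂_z f = (∂_x f − i ∂_y f)/2` of a function
`f : ℂ → ℂ`, viewed as real-differentiable. -/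
noncomputable def wirtingerD (f : ℂ → ℂ) (z : ℂ) : ℂ :=
  (fderiv ℝ f z 1 - Complex.I * fderiv ℝ f z Complex.I) / 2

lemma wirtinger_congr {f g : ℂ → ℂ} {z : ℂ} (h : f =ᶠ[nhds z] g) :
    wirtingerD f z = wirtingerD g z := by
  unfold wirtingerD
  rw [Filter.EventuallyEq.fderiv_eq h]

lemma wirtinger_re {h : ℂ → ℂ} {c z : ℂ} (hh : HasDerivAt h c z) :
    wirtingerD (fun w => (((h w).re : ℝ) : ℂ)) z = c / 2 := by
  have hF : HasFDerivAt h
      ((ContinuousLinearMap.smulRight (1 : ℂ →L[ℂ] ℂ) c).restrictScalars ℝ) z :=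
    hh.hasFDerivAt.restrictScalars ℝ
  have hcomp : HasFDerivAt (fun w => (((h w).re : ℝ) : ℂ))
      ((Complex.ofRealCLM.comp Complex.reCLM).comp
        ((ContinuousLinearMap.smulRight (1 : ℂ →L[ℂ] ℂ) c).restrictScalars ℝ)) z :=
    (Complex.ofRealCLM.comp Complex.reCLM).hasFDerivAt.comp z hF
  unfold wirtingerD
  rw [hcomp.fderiv]
  simp [Complex.ext_iff]

/-- Hamilton–Jacobi equation: if `U_t(z) = Re g(z, u*(z,t))` with
`g(z,u) = L(u) + (z−u)²/(2t)` (`L` a holomorphic branch of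
`(1/α)Σ_j α_j Log(u−λ_j)`) and `u*(z,t)` a holomorphic-in-`(z,t)` solution of the
saddle point equation `∂_u g = 0`, then `∂_t U_t(z) = −(∂_z U_t(z))²` where
`∂_z, ∂_t` are Wirtinger derivatives. -/
theorem hamilton_jacobi_for_log_potential
    (d : ℕ) (lam : Fin d → ℂ) (hinj : Function.Injective lam)
    (a : Fin d → ℝ) (hpos : ∀ j, 0 < a j) (A : ℝ) (hA : A = ∑ j, a j)
    (D : Set (ℂ × ℂ)) (hD : IsOpen D) (htne : ∀ p ∈ D, p.2 ≠ 0)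
    (ustar : ℂ → ℂ → ℂ)
    (hu : DifferentiableOn ℂ (fun p : ℂ × ℂ => ustar p.1 p.2) D)
    (V : Set ℂ) (hV : IsOpen V) (hVlam : ∀ j, lam j ∉ V)
    (hrange : ∀ p ∈ D, ustar p.1 p.2 ∈ V)
    (L : ℂ → ℂ)
    (hL : ∀ u ∈ V, HasDerivAt L ((1 / (A : ℂ)) * ∑ j, (a j : ℂ) / (u - lam j)) u)
    (hsaddle : ∀ p ∈ D,
      (1 / (A : ℂ)) * ∑ j, (a j : ℂ) / (ustar p.1 p.2 - lam j)
        = (p.1 - ustar p.1 p.2) / p.2)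
    (U : ℂ → ℂ → ℝ)
    (hU : ∀ p ∈ D,
      U p.1 p.2 = (L (ustar p.1 p.2) + (p.1 - ustar p.1 p.2) ^ 2 / (2 * p.2)).re) :
    ∀ p ∈ D,
      wirtingerD (fun t => ((U p.1 t : ℝ) : ℂ)) p.2
        = -(wirtingerD (fun z => ((U z p.2 : ℝ) : ℂ)) p.1) ^ 2 := by
  rintro ⟨z0, t0⟩ hp
  set w0 := ustar z0 t0 with hw0
  have ht0 : t0 ≠ 0 := htne _ hp
  have hdu : DifferentiableAt ℂ (fun q : ℂ × ℂ => ustar q.1 q.2) (z0, t0) :=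
    (hu _ hp).differentiableAt (hD.mem_nhds hp)
  -- derivative of L at w0
  have hS : HasDerivAt L ((z0 - w0) / t0) w0 := by
    have := hL w0 (hrange _ hp)
    rwa [hsaddle _ hp] at this
  -- partial derivatives of ustar
  have hdz : DifferentiableAt ℂ (fun z => ustar z t0) z0 :=
    by have hin : DifferentiableAt ℂ (fun z : ℂ => (z, t0)) z0 := by fun_prop
       exact DifferentiableAt.comp (g := fun q : ℂ × ℂ => ustar q.1 q.2) z0 hdu hin
  have hdt : DifferentiableAt ℂ (fun t => ustar z0 t) t0 :=
    by have hin : DifferentiableAt ℂ (fun t : ℂ => (z0, t)) t0 := by fun_prop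
       exact DifferentiableAt.comp (g := fun q : ℂ × ℂ => ustar q.1 q.2) t0 hdu hin
  set cz := deriv (fun z => ustar z t0) z0 with hcz
  set ct := deriv (fun t => ustar z0 t) t0 with hct
  have huz : HasDerivAt (fun z => ustar z t0) cz z0 := hdz.hasDerivAt
  have hut : HasDerivAt (fun t => ustar z0 t) ct t0 := hdt.hasDerivAt
  -- derivative in z of G(z) = L(ustar z t0) + (z - ustar z t0)^2/(2 t0)
  have hGz : HasDerivAt
      (fun z => L (ustar z t0) + (z - ustar z t0) ^ 2 / (2 * t0))
      ((z0 - w0) / t0) z0 := by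
    have h1 : HasDerivAt (fun z => L (ustar z t0)) (((z0 - w0) / t0) * cz) z0 :=
      hS.comp z0 huz
    have h2 : HasDerivAt (fun z : ℂ => z - ustar z t0) (1 - cz) z0 :=
      (hasDerivAt_id z0).sub huz
    have h3 : HasDerivAt (fun z => (z - ustar z t0) ^ 2)
        (2 * (z0 - w0) ^ 1 * (1 - cz)) z0 := by
      simpa using h2.fun_pow 2
    have h4 := h1.fun_add (h3.div_const (2 * t0))
    refine HasDerivAt.congr_deriv h4 ?_
    field_simp
    ring
  -- derivative in t of H(t) = L(ustar z0 t) + (z0 - ustar z0 t)^2/(2 t)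
  have hGt : HasDerivAt
      (fun t => L (ustar z0 t) + (z0 - ustar z0 t) ^ 2 / (2 * t))
      (-(z0 - w0) ^ 2 / (2 * t0 ^ 2)) t0 := by
    have h1 : HasDerivAt (fun t => L (ustar z0 t)) (((z0 - w0) / t0) * ct) t0 :=
      hS.comp t0 hut
    have h2 : HasDerivAt (fun t : ℂ => z0 - ustar z0 t) (0 - ct) t0 :=
      (hasDerivAt_const t0 z0).sub hut
    have h3 : HasDerivAt (fun t => (z0 - ustar z0 t) ^ 2)
        (2 * (z0 - w0) ^ 1 * (0 - ct)) t0 := by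
      simpa using h2.fun_pow 2
    have hg : HasDerivAt (fun t : ℂ => 2 * t) 2 t0 := by
      simpa using (hasDerivAt_id t0).const_mul (2 : ℂ)
    have hgne : (2 : ℂ) * t0 ≠ 0 := by
      simp [ht0]
    have h4 : HasDerivAt (fun t => (z0 - ustar z0 t) ^ 2 / (2 * t))
        ((2 * (z0 - w0) ^ 1 * (0 - ct) * (2 * t0) - (z0 - w0) ^ 2 * 2)
          / (2 * t0) ^ 2) t0 := h3.div hg hgne
    have h5 := h1.fun_add h4
    refine HasDerivAt.congr_deriv h5 ?_
    field_simp
    ring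
  -- express U locally as real part
  have hevz : (fun z => ((U z t0 : ℝ) : ℂ)) =ᶠ[nhds z0]
      (fun z => (((L (ustar z t0) + (z - ustar z t0) ^ 2 / (2 * t0)).re : ℝ) : ℂ)) := by
    have hmem : ∀ᶠ z in nhds z0, (z, t0) ∈ D := by
      have hc : ContinuousAt (fun z : ℂ => (z, t0)) z0 :=
        (continuous_id.prodMk continuous_const).continuousAt
      exact hc.preimage_mem_nhds (hD.mem_nhds hp)
    filter_upwards [hmem] with z hz
    rw [hU (z, t0) hz]
  have hevt : (fun t => ((U z0 t : ℝ) : ℂ)) =ᶠ[nhds t0]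
      (fun t => (((L (ustar z0 t) + (z0 - ustar z0 t) ^ 2 / (2 * t)).re : ℝ) : ℂ)) := by
    have hmem : ∀ᶠ t in nhds t0, (z0, t) ∈ D := by
      have hc : ContinuousAt (fun t : ℂ => (z0, t)) t0 :=
        (continuous_const.prodMk continuous_id).continuousAt
      exact hc.preimage_mem_nhds (hD.mem_nhds hp)
    filter_upwards [hmem] with t hz
    rw [hU (z0, t) hz]
  have e1 : wirtingerD (fun t => ((U z0 t : ℝ) : ℂ)) t0
      = (-(z0 - w0) ^ 2 / (2 * t0 ^ 2)) / 2 := by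
    rw [wirtinger_congr hevt, wirtinger_re hGt]
  have e2 : wirtingerD (fun z => ((U z t0 : ℝ) : ℂ)) z0
      = ((z0 - w0) / t0) / 2 := by
    rw [wirtinger_congr hevz, wirtinger_re hGz]
  show wirtingerD (fun t => ((U z0 t : ℝ) : ℂ)) t0
      = -(wirtingerD (fun z => ((U z t0 : ℝ) : ℂ)) z0) ^ 2
  rw [e1, e2]
  field_simp
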